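/- Let f* : ℝ⁸ × ℝ⁸ → ℝ be defined on the open set {(x,y) : ‖y‖² − ‖x‖² > 0} by f*(x,y) = y₁ · (‖y‖² − ‖x‖²)^(−1/2), where y₁ denotes a fixed coordinate of y and ‖·‖ is the Euclidean norm. Then at every point (x,y) with ‖y‖² − ‖x‖² > 0 one has ∑_{i=0}^{7} (∂²f*/∂x_i² − ∂²f*/∂y_i²)(x,y) = 15 · y₁ · (‖y‖² − ‖x‖²)^(−3/2). In particular, on the quadric {‖y‖² − ‖x‖² = 1} the flat d'Alembertian of f* equals 15 y₁. -/

import Mathlib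

open Real

/-- `fstar x y = y₁ · (‖y‖² − ‖x‖²)^(−1/2)`, written in coordinates on `ℝ⁸ × ℝ⁸`. -/
noncomputable def fstar (x y : Fin 8 → ℝ) : ℝ :=
  y 1 * (∑ j, (y j) ^ 2 - ∑ j, (x j) ^ 2) ^ (-(1 : ℝ) / 2)

lemma sum_update_sq (x : Fin 8 → ℝ) (i : Fin 8) (s : ℝ) :
    ∑ j, (Function.update x i s j) ^ 2 = (∑ j, (x j) ^ 2) - (x i) ^ 2 + s ^ 2 := by
  have h : (fun j => (Function.update x i s j) ^ 2)
      = Function.update (fun j => (x j) ^ 2) i (s ^ 2) := by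
    funext j
    by_cases hj : j = i <;> simp [Function.update, hj]
  rw [h, Finset.sum_update_of_mem (Finset.mem_univ i),
    Finset.sum_sdiff_eq_sub (Finset.subset_univ {i}), Finset.sum_singleton]
  ring

lemma deriv_deriv_eq {g g1 : ℝ → ℝ} {s₀ v : ℝ} {U : Set ℝ} (hU : IsOpen U) (hs : s₀ ∈ U)
    (h1 : ∀ s ∈ U, HasDerivAt g (g1 s) s) (h2 : HasDerivAt g1 v s₀) :
    deriv (deriv g) s₀ = v := by
  have he : deriv g =ᶠ[nhds s₀] g1 := by
    filter_upwards [hU.mem_nhds hs] with s hs using (h1 s hs).deriv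
  rw [he.deriv_eq, h2.deriv]

lemma L1 (c a ε s : ℝ) (h : 0 < a + ε * s ^ 2) :
    HasDerivAt (fun t => c * (a + ε * t ^ 2) ^ (-(1:ℝ)/2))
      (c * (-(ε * s)) * (a + ε * s ^ 2) ^ (-(3:ℝ)/2)) s := by
  have h0 : HasDerivAt (fun t : ℝ => a + ε * t ^ 2) (ε * (2 * s)) s := by
    simpa using ((hasDerivAt_pow 2 s).const_mul ε).const_add a
  have h1 := (h0.rpow_const (p := -(1:ℝ)/2) (Or.inl h.ne')).const_mul c
  refine h1.congr_deriv ?_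
  rw [show (-(1:ℝ)/2 - 1) = -(3:ℝ)/2 by norm_num]
  ring

lemma L2 (c a ε s : ℝ) (h : 0 < a + ε * s ^ 2) :
    HasDerivAt (fun t => c * (-(ε * t)) * (a + ε * t ^ 2) ^ (-(3:ℝ)/2))
      (c * (-ε) * (a + ε * s ^ 2) ^ (-(3:ℝ)/2)
        + 3 * c * ε ^ 2 * s ^ 2 * (a + ε * s ^ 2) ^ (-(5:ℝ)/2)) s := by
  have h0 : HasDerivAt (fun t : ℝ => a + ε * t ^ 2) (ε * (2 * s)) s := by
    simpa using ((hasDerivAt_pow 2 s).const_mul ε).const_add a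
  have h1 := h0.rpow_const (p := -(3:ℝ)/2) (Or.inl h.ne')
  have h2 : HasDerivAt (fun t : ℝ => c * (-(ε * t))) (c * (-ε)) s := by
    simpa using ((hasDerivAt_id s).const_mul (ε)).neg.const_mul c
  have := h2.mul h1
  refine this.congr_deriv ?_
  rw [show (-(3:ℝ)/2 - 1) = -(5:ℝ)/2 by norm_num]
  ring

lemma L1' (a s : ℝ) (h : 0 < a + s ^ 2) :
    HasDerivAt (fun t => t * (a + t ^ 2) ^ (-(1:ℝ)/2))
      (a * (a + s ^ 2) ^ (-(3:ℝ)/2)) s := by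
  have h0 : HasDerivAt (fun t : ℝ => a + t ^ 2) (2 * s) s := by
    simpa using (hasDerivAt_pow 2 s).const_add a
  have h1 := h0.rpow_const (p := -(1:ℝ)/2) (Or.inl h.ne')
  have := (hasDerivAt_id s).mul h1
  refine this.congr_deriv ?_
  rw [show (-(1:ℝ)/2 - 1) = -(3:ℝ)/2 by norm_num]
  have key : (a + s ^ 2) ^ (-(1:ℝ)/2) = (a + s ^ 2) * (a + s ^ 2) ^ (-(3:ℝ)/2) := by
    rw [show (-(1:ℝ)/2) = 1 + -(3:ℝ)/2 by norm_num, rpow_add h, rpow_one]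
  rw [key]; simp only [id_eq]; ring

lemma L2' (a s : ℝ) (h : 0 < a + s ^ 2) :
    HasDerivAt (fun t => a * (a + t ^ 2) ^ (-(3:ℝ)/2))
      (-3 * a * s * (a + s ^ 2) ^ (-(5:ℝ)/2)) s := by
  have h0 : HasDerivAt (fun t : ℝ => a + t ^ 2) (2 * s) s := by
    simpa using (hasDerivAt_pow 2 s).const_add a
  have h1 := (h0.rpow_const (p := -(3:ℝ)/2) (Or.inl h.ne')).const_mul a
  refine h1.congr_deriv ?_
  rw [show (-(3:ℝ)/2 - 1) = -(5:ℝ)/2 by norm_num]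
  ring


lemma deriv2_x (x y : Fin 8 → ℝ) (i : Fin 8)
    (h : (∑ j, (y j) ^ 2) - ∑ j, (x j) ^ 2 > 0) :
    deriv (deriv (fun s => fstar (Function.update x i s) y)) (x i)
      = y 1 * ((∑ j, (y j) ^ 2 - ∑ j, (x j) ^ 2) ^ (-(3:ℝ)/2))
        + 3 * y 1 * (x i) ^ 2 * ((∑ j, (y j) ^ 2 - ∑ j, (x j) ^ 2) ^ (-(5:ℝ)/2)) := by
  set a : ℝ := (∑ j, (y j) ^ 2) - (∑ j, (x j) ^ 2) + (x i) ^ 2 with ha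
  have hfun : (fun s => fstar (Function.update x i s) y)
      = fun s => y 1 * (a + (-1) * s ^ 2) ^ (-(1:ℝ)/2) := by
    funext s
    rw [fstar, sum_update_sq]
    congr 2
    ring
  have hU : IsOpen {s : ℝ | 0 < a + (-1) * s ^ 2} :=
    isOpen_lt continuous_const (by continuity)
  have hmem : x i ∈ {s : ℝ | 0 < a + (-1) * s ^ 2} := by
    simp only [Set.mem_setOf_eq, ha]; linarith
  rw [hfun]
  rw [deriv_deriv_eq hU hmem (fun s hs => L1 (y 1) a (-1) s hs)
    (L2 (y 1) a (-1) (x i) hmem)]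
  rw [show a + (-1) * (x i) ^ 2 = (∑ j, (y j) ^ 2 - ∑ j, (x j) ^ 2) by rw [ha]; ring]
  ring

lemma deriv2_y (x y : Fin 8 → ℝ) (i : Fin 8) (hi : i ≠ 1)
    (h : (∑ j, (y j) ^ 2) - ∑ j, (x j) ^ 2 > 0) :
    deriv (deriv (fun s => fstar x (Function.update y i s))) (y i)
      = y 1 * (-1) * ((∑ j, (y j) ^ 2 - ∑ j, (x j) ^ 2) ^ (-(3:ℝ)/2))
        + 3 * y 1 * (y i) ^ 2 * ((∑ j, (y j) ^ 2 - ∑ j, (x j) ^ 2) ^ (-(5:ℝ)/2)) := by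
  set a : ℝ := (∑ j, (y j) ^ 2) - (y i) ^ 2 - (∑ j, (x j) ^ 2) with ha
  have hfun : (fun s => fstar x (Function.update y i s))
      = fun s => y 1 * (a + 1 * s ^ 2) ^ (-(1:ℝ)/2) := by
    funext s
    rw [fstar, sum_update_sq, Function.update_of_ne (Ne.symm hi)]
    congr 2
    ring
  have hU : IsOpen {s : ℝ | 0 < a + 1 * s ^ 2} :=
    isOpen_lt continuous_const (by continuity)
  have hmem : y i ∈ {s : ℝ | 0 < a + 1 * s ^ 2} := by
    simp only [Set.mem_setOf_eq, ha]; linarith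
  rw [hfun]
  rw [deriv_deriv_eq hU hmem (fun s hs => L1 (y 1) a 1 s hs)
    (L2 (y 1) a 1 (y i) hmem)]
  rw [show a + 1 * (y i) ^ 2 = (∑ j, (y j) ^ 2 - ∑ j, (x j) ^ 2) by rw [ha]; ring]
  ring

lemma deriv2_y1 (x y : Fin 8 → ℝ)
    (h : (∑ j, (y j) ^ 2) - ∑ j, (x j) ^ 2 > 0) :
    deriv (deriv (fun s => fstar x (Function.update y 1 s))) (y 1)
      = -3 * ((∑ j, (y j) ^ 2 - ∑ j, (x j) ^ 2) - (y 1) ^ 2) * y 1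
          * ((∑ j, (y j) ^ 2 - ∑ j, (x j) ^ 2) ^ (-(5:ℝ)/2)) := by
  set a : ℝ := (∑ j, (y j) ^ 2) - (y 1) ^ 2 - (∑ j, (x j) ^ 2) with ha
  have hfun : (fun s => fstar x (Function.update y 1 s))
      = fun s => s * (a + s ^ 2) ^ (-(1:ℝ)/2) := by
    funext s
    rw [fstar, sum_update_sq, Function.update_self]
    congr 2
    ring
  have hU : IsOpen {s : ℝ | 0 < a + s ^ 2} :=
    isOpen_lt continuous_const (by continuity)
  have hmem : y 1 ∈ {s : ℝ | 0 < a + s ^ 2} := by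
    simp only [Set.mem_setOf_eq, ha]; linarith
  rw [hfun]
  rw [deriv_deriv_eq hU hmem (fun s hs => L1' a s hs) (L2' a (y 1) hmem)]
  rw [show a + (y 1) ^ 2 = (∑ j, (y j) ^ 2 - ∑ j, (x j) ^ 2) by rw [ha]; ring, ha]
  ring

/-- The flat d'Alembertian of signature (8,8) applied to
`f*(x,y) = y₁ (‖y‖² − ‖x‖²)^{-1/2}` equals `15 y₁ (‖y‖² − ‖x‖²)^{-3/2}` wherever
`‖y‖² − ‖x‖² > 0`; in particular on the quadric `‖y‖² − ‖x‖² = 1` it equals `15 y₁`. -/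
theorem dalembertian_fstar (x y : Fin 8 → ℝ)
    (h : (∑ j, (y j) ^ 2) - ∑ j, (x j) ^ 2 > 0) :
    (∑ i, (deriv (deriv (fun s => fstar (Function.update x i s) y)) (x i)
        - deriv (deriv (fun s => fstar x (Function.update y i s))) (y i))
      = 15 * y 1 * ((∑ j, (y j) ^ 2 - ∑ j, (x j) ^ 2) ^ (-(3 : ℝ) / 2))) ∧
    ((∑ j, (y j) ^ 2) - ∑ j, (x j) ^ 2 = 1 →
      (∑ i, (deriv (deriv (fun s => fstar (Function.update x i s) y)) (x i)
        - deriv (deriv (fun s => fstar x (Function.update y i s))) (y i)))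
      = 15 * y 1) := by
  have main : (∑ i, (deriv (deriv (fun s => fstar (Function.update x i s) y)) (x i)
        - deriv (deriv (fun s => fstar x (Function.update y i s))) (y i))
      = 15 * y 1 * ((∑ j, (y j) ^ 2 - ∑ j, (x j) ^ 2) ^ (-(3 : ℝ) / 2))) := by
    rw [Fin.sum_univ_eight]
    rw [deriv2_x x y 0 h, deriv2_x x y 1 h, deriv2_x x y 2 h, deriv2_x x y 3 h,
      deriv2_x x y 4 h, deriv2_x x y 5 h, deriv2_x x y 6 h, deriv2_x x y 7 h,
      deriv2_y x y 0 (by decide) h, deriv2_y1 x y h,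
      deriv2_y x y 2 (by decide) h, deriv2_y x y 3 (by decide) h,
      deriv2_y x y 4 (by decide) h, deriv2_y x y 5 (by decide) h,
      deriv2_y x y 6 (by decide) h, deriv2_y x y 7 (by decide) h]
    rw [show ((∑ j, (y j) ^ 2 - ∑ j, (x j) ^ 2) ^ (-(3:ℝ)/2))
        = (∑ j, (y j) ^ 2 - ∑ j, (x j) ^ 2)
          * ((∑ j, (y j) ^ 2 - ∑ j, (x j) ^ 2) ^ (-(5:ℝ)/2)) from by
      rw [show (-(3:ℝ)/2) = 1 + -(5:ℝ)/2 by norm_num, rpow_add h, rpow_one]]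
    simp only [Fin.sum_univ_eight]
    ring
  refine ⟨main, fun h1 => ?_⟩
  rw [main, h1]
  simp [Real.one_rpow]
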